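/- Let α be irrational with convergents pₙ/qₙ. If p, q are integers with q > 0, gcd(p,q)=1, and |qα − p| < 1/(2q), then (p, q) = (pₙ, qₙ) for some n ∈ ℕ. -/

import Mathlib

open Int

/-- All Gauss-map iterates of an irrational number are irrational. -/
lemma aux_irr (ξ : ℝ) (hirr : Irrational ξ) (a : ℕ → ℤ) (x : ℕ → ℝ)
    (hx0 : x 0 = ξ) (ha : ∀ n, a n = ⌊x n⌋) (hx : ∀ n, x (n + 1) = 1 / (x n - a n)) :
    ∀ m, Irrational (x m) := by
  intro m
  induction m with
  | zero => rwa [hx0]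
  | succ k ih =>
    rw [hx k, one_div, ha k]
    exact (ih.sub_intCast ⌊x k⌋).inv

lemma aux_a_pos (ξ : ℝ) (hirr : Irrational ξ) (a : ℕ → ℤ) (x : ℕ → ℝ)
    (hx0 : x 0 = ξ) (ha : ∀ n, a n = ⌊x n⌋) (hx : ∀ n, x (n + 1) = 1 / (x n - a n)) :
    ∀ m, 1 ≤ a (m + 1) := by
  intro m
  have hirr' := aux_irr ξ hirr a x hx0 ha hx m
  have h1 : (0 : ℝ) < x m - a m := by
    rw [ha m]
    have := Int.fract_nonneg (x m)
    have hne : Int.fract (x m) ≠ 0 := by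
      intro h0
      have hxm : x m = (⌊x m⌋ : ℝ) := by
        have h := Int.floor_add_fract (x m)
        rw [h0, add_zero] at h
        exact h.symm
      exact Int.not_irrational ⌊x m⌋ (hxm ▸ hirr')
    rw [Int.fract] at hne this
    exact lt_of_le_of_ne this (Ne.symm hne)
  have h2 : x m - a m < 1 := by
    rw [ha m]
    have := Int.fract_lt_one (x m)
    rwa [Int.fract] at this
  have hgt : 1 ≤ x (m + 1) := by
    rw [hx m]
    rw [le_div_iff₀ h1]
    linarith
  rw [ha (m + 1)]
  exact Int.le_floor.mpr (by exact_mod_cast hgt)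

lemma aux_q_pos (ξ : ℝ) (hirr : Irrational ξ) (a : ℕ → ℤ) (x : ℕ → ℝ)
    (hx0 : x 0 = ξ) (ha : ∀ n, a n = ⌊x n⌋) (hx : ∀ n, x (n + 1) = 1 / (x n - a n))
    (q : ℕ → ℤ) (hq0 : q 0 = 1) (hq1 : q 1 = a 1)
    (hq : ∀ n, q (n + 2) = a (n + 2) * q (n + 1) + q n) :
    ∀ m, 1 ≤ q m := by
  have key : ∀ m, 1 ≤ q m ∧ 1 ≤ q (m + 1) := by
    intro m
    induction m with
    | zero => exact ⟨by omega, by rw [hq1]; exact aux_a_pos ξ hirr a x hx0 ha hx 0⟩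
    | succ k ih =>
      refine ⟨ih.2, ?_⟩
      rw [hq k]
      have := aux_a_pos ξ hirr a x hx0 ha hx (k + 1)
      nlinarith [ih.1, ih.2]
  exact fun m => (key m).1

lemma aux_det (a p q : ℕ → ℤ)
    (hp0 : p 0 = a 0) (hq0 : q 0 = 1) (hp1 : p 1 = a 1 * a 0 + 1) (hq1 : q 1 = a 1)
    (hp : ∀ n, p (n + 2) = a (n + 2) * p (n + 1) + p n)
    (hq : ∀ n, q (n + 2) = a (n + 2) * q (n + 1) + q n) :
    ∀ m, p m * q (m + 1) - p (m + 1) * q m = (-1) ^ (m + 1) := by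
  intro m
  induction m with
  | zero => rw [hp0, hq0, hp1, hq1]; ring
  | succ k ih =>
    rw [hp k, hq k, pow_succ]
    nlinarith [ih]

lemma aux_coprime (a p q : ℕ → ℤ)
    (hp0 : p 0 = a 0) (hq0 : q 0 = 1) (hp1 : p 1 = a 1 * a 0 + 1) (hq1 : q 1 = a 1)
    (hp : ∀ n, p (n + 2) = a (n + 2) * p (n + 1) + p n)
    (hq : ∀ n, q (n + 2) = a (n + 2) * q (n + 1) + q n) :
    ∀ m, IsCoprime (p m) (q m) := by
  intro m
  have hd := aux_det a p q hp0 hq0 hp1 hq1 hp hq m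
  refine ⟨(-1) ^ (m + 1) * q (m + 1), -((-1) ^ (m + 1) * p (m + 1)), ?_⟩
  have h1 : ((-1 : ℤ)) ^ (m + 1) * (-1) ^ (m + 1) = 1 := by
    rw [← pow_add]
    exact Even.neg_one_pow ⟨m + 1, by ring⟩
  linear_combination ((-1 : ℤ)) ^ (m + 1) * hd + h1

lemma aux_conv : ∀ (n : ℕ) (ξ : ℝ), Irrational ξ → ∀ (a : ℕ → ℤ) (x : ℕ → ℝ),
    x 0 = ξ → (∀ m, a m = ⌊x m⌋) → (∀ m, x (m + 1) = 1 / (x m - a m)) →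
    ∀ (p q : ℕ → ℤ), p 0 = a 0 → q 0 = 1 → p 1 = a 1 * a 0 + 1 → q 1 = a 1 →
    (∀ m, p (m + 2) = a (m + 2) * p (m + 1) + p m) →
    (∀ m, q (m + 2) = a (m + 2) * q (m + 1) + q m) →
    ξ.convergent n = (p n : ℚ) / (q n) := by
  intro n
  induction n with
  | zero =>
    intro ξ hirr a x hx0 ha hx p q hp0 hq0 hp1 hq1 hp hq
    rw [Real.convergent_zero, hp0, hq0, ha 0, hx0]
    simp
  | succ n ih =>
    intro ξ hirr a x hx0 ha hx p q hp0 hq0 hp1 hq1 hp hq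
    have ha0 : a 0 = ⌊ξ⌋ := by rw [ha 0, hx0]
    have hx1 : x 1 = (Int.fract ξ)⁻¹ := by
      rw [hx 0, hx0, ha0, Int.fract, one_div]
    have hirr' : Irrational ((Int.fract ξ)⁻¹) := by
      rw [Int.fract]
      exact (hirr.sub_intCast ⌊ξ⌋).inv
    -- shifted sequences
    set a' : ℕ → ℤ := fun k => a (k + 1) with ha'
    set x' : ℕ → ℝ := fun k => x (k + 1) with hx'
    set p' : ℕ → ℤ := fun k => q (k + 1) with hp'
    set q' : ℕ → ℤ := fun k => p (k + 1) - a 0 * q (k + 1) with hq'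
    have key := ih ((Int.fract ξ)⁻¹) hirr' a' x' hx1
      (fun m => ha (m + 1)) (fun m => hx (m + 1)) p' q'
      (by simp only [hp', ha', hq1])
      (by simp only [hq', hp1, hq1]; ring)
      (by simp only [hp', ha', hq 0, hq0, hq1])
      (by simp only [hq', ha', hp 0, hq 0, hp0, hq0, hp1, hq1]; ring)
      (fun m => by simp only [hp', ha', hq (m + 1)])
      (fun m => by simp only [hq', ha', hp (m + 1), hq (m + 1)]; ring)
    have hqpos : ∀ m, 1 ≤ q m :=
      aux_q_pos ξ hirr a x hx0 ha hx q hq0 hq1 hq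
    have hq'pos : ∀ m, 1 ≤ q' m := by
      have := aux_q_pos ((Int.fract ξ)⁻¹) hirr' a' x' hx1
        (fun m => ha (m + 1)) (fun m => hx (m + 1)) q'
        (by simp only [hq', hp1, hq1]; ring)
        (by simp only [hq', ha', hp 0, hq 0, hp0, hq0, hp1, hq1]; ring)
        (fun m => by simp only [hq', ha', hp (m + 1), hq (m + 1)]; ring)
      exact this
    rw [Real.convergent_succ, key, ← ha0]
    have h1 : ((q (n + 1) : ℚ)) ≠ 0 := by
      have := hqpos (n + 1); intro h; rw [Int.cast_eq_zero] at h; omega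
    have h2 : ((q' n : ℚ)) ≠ 0 := by
      have := hq'pos n; intro h; rw [Int.cast_eq_zero] at h; omega
    simp only [hp', hq'] at key h2 ⊢
    field_simp
    try push_cast
    try ring

theorem good_approximations_are_convergents (α : ℝ) (hirr : Irrational α)
    (a : ℕ → ℤ) (x : ℕ → ℝ)
    (hx0 : x 0 = α)
    (ha : ∀ n, a n = ⌊x n⌋)
    (hx : ∀ n, x (n + 1) = 1 / (x n - a n))
    (p q : ℕ → ℤ)
    (hp0 : p 0 = a 0) (hq0 : q 0 = 1)
    (hp1 : p 1 = a 1 * a 0 + 1) (hq1 : q 1 = a 1)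
    (hp : ∀ n, p (n + 2) = a (n + 2) * p (n + 1) + p n)
    (hq : ∀ n, q (n + 2) = a (n + 2) * q (n + 1) + q n) :
    ∀ P Q : ℤ, 0 < Q → IsCoprime P Q → |(Q : ℝ) * α - (P : ℝ)| < 1 / (2 * (Q : ℝ)) →
      ∃ n : ℕ, P = p n ∧ Q = q n := by
  intro P Q hQ hcop happ
  have hgcd : Nat.Coprime P.natAbs Q.natAbs := Int.isCoprime_iff_gcd_eq_one.mp hcop
  set ρ : ℚ := (P : ℚ) / (Q : ℚ) with hρ
  have hnum : ρ.num = P := Rat.num_div_eq_of_coprime hQ hgcd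
  have hden : (ρ.den : ℤ) = Q := Rat.den_div_eq_of_coprime hQ hgcd
  have hQR : (0 : ℝ) < (Q : ℝ) := by exact_mod_cast hQ
  have hρR : (ρ : ℝ) = (P : ℝ) / (Q : ℝ) := by push_cast [hρ]; ring
  have happ' : |α - ρ| < 1 / (2 * (ρ.den : ℝ) ^ 2) := by
    have hdR : ((ρ.den : ℝ)) = (Q : ℝ) := by exact_mod_cast hden
    rw [hρR, hdR]
    have h3 : α - (P : ℝ) / Q = ((Q : ℝ) * α - P) / Q := by
      field_simp
    rw [h3, abs_div, abs_of_pos hQR, div_lt_iff₀ hQR]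
    calc |(Q:ℝ) * α - P| < 1 / (2 * Q) := happ
      _ = 1 / (2 * Q ^ 2) * Q := by
          field_simp
  obtain ⟨n, hn⟩ := Real.exists_rat_eq_convergent happ'
  have hconv := aux_conv n α hirr a x hx0 ha hx p q hp0 hq0 hp1 hq1 hp hq
  have hqpos : 1 ≤ q n := aux_q_pos α hirr a x hx0 ha hx q hq0 hq1 hq n
  have hcop' : Nat.Coprime (p n).natAbs (q n).natAbs :=
    Int.isCoprime_iff_gcd_eq_one.mp (aux_coprime a p q hp0 hq0 hp1 hq1 hp hq n)
  have hqn : (0 : ℤ) < q n := by omega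
  have heq : ρ = ((p n : ℚ)) / (q n) := by rw [hn, hconv]
  refine ⟨n, ?_, ?_⟩
  · rw [← hnum, heq, Rat.num_div_eq_of_coprime hqn hcop']
  · rw [← hden, heq, Rat.den_div_eq_of_coprime hqn hcop']
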